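/- For a finite graph G = (V,E) and a subset J of vertices, J is a transversal of the partition of successive differences for some chain of flats of G if and only if J is a partial transversal of the partition of successive differences for some maximal chain of flats of G. -/

import Mathlib

/-- `St(W)`: the set of vertices adjacent to every vertex of `W` (so `St(∅) = V`). -/
def starW {V : Type*} (G : SimpleGraph V) (W : Set V) : Set V := {v | ∀ w ∈ W, G.Adj v w}

/-- The flats of `G`: all sets of the form `St(W)`, `W ⊆ V`. -/
def flats {V : Type*} (G : SimpleGraph V) : Set (Set V) := {X | ∃ W : Set V, X = starW G W}

/-- Height of a family of sets: the largest `k` admitting a strictly decreasing chain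
`X₀ ⊃ X₁ ⊃ … ⊃ X_k` inside the family. -/
noncomputable def heightOf {V : Type*} (F : Set (Set V)) : ℕ :=
  sSup {k | ∃ c : Fin (k + 1) → Set V, StrictAnti c ∧ ∀ i, c i ∈ F}

/-- The c-rank of a graph: the height of its lattice of flats. -/
noncomputable def crk {V : Type*} (G : SimpleGraph V) : ℕ := heightOf (flats G)

/-- `J` has a witness in `A_G^c`: there is an equal-size row set such that the corresponding
submatrix of the complemented adjacency matrix can be put in lower unitriangular form
(1's on the diagonal, 0's above) by independently permuting rows and columns. -/
def hasWitness {V : Type*} (G : SimpleGraph V) (J : Finset V) : Prop :=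
  ∃ i : Fin J.card → V, ∃ j : Fin J.card → V,
    Function.Injective i ∧ Function.Injective j ∧ (∀ r, j r ∈ J) ∧
    (∀ r, ¬ G.Adj (i r) (j r)) ∧ (∀ r s, r < s → G.Adj (i r) (j s))

/-- The c-rank of `G` defined via witnesses: maximum size of a vertex subset with a witness. -/
noncomputable def crkW {V : Type*} (G : SimpleGraph V) : ℕ :=
  sSup {k | ∃ J : Finset V, J.card = k ∧ hasWitness G J}

/-- A strictly decreasing chain of flats of `G`. -/
def IsFlatChain {V : Type*} (G : SimpleGraph V) {k : ℕ} (c : Fin (k + 1) → Set V) : Prop :=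
  StrictAnti c ∧ ∀ i, c i ∈ flats G

/-- `J` is a transversal of the partition of successive differences of the chain `c`:
`J = {y₁, …, y_k}` with `y_i ∈ X_{i-1} \ X_i`. -/
def IsTransversal {V : Type*} {k : ℕ} (c : Fin (k + 1) → Set V) (J : Set V) : Prop :=
  ∃ y : Fin k → V, Set.range y = J ∧ ∀ i : Fin k, y i ∈ c i.castSucc \ c i.succ

/-- `c` is a maximal chain of flats: no flat can be inserted into it. -/
def IsMaximalFlatChain {V : Type*} (G : SimpleGraph V) {k : ℕ} (c : Fin (k + 1) → Set V) : Prop :=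
  IsFlatChain G c ∧
    ∀ X ∈ flats G, IsChain (· ⊆ ·) (insert X (Set.range c)) → X ∈ Set.range c

/-- Any finite nonempty chain in a partial order can be enumerated strictly decreasingly. -/
lemma chain_enum {α : Type*} [PartialOrder α] {s : Set α} (hs : IsChain (· ≤ ·) s)
    (hfin : s.Finite) (hne : s.Nonempty) :
    ∃ (n : ℕ) (e : Fin (n + 1) → α), StrictAnti e ∧ Set.range e = s := by
  letI := hfin.fintype
  letI : LinearOrder s :=
    { (inferInstance : PartialOrder s) with
      le_total := fun a b => hs.total a.2 b.2
      toDecidableLE := Classical.decRel _ }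
  obtain ⟨n, hn⟩ : ∃ n, Fintype.card s = n + 1 := by
    have : 0 < Fintype.card s := Fintype.card_pos_iff.mpr (hne.to_subtype)
    exact ⟨Fintype.card s - 1, by omega⟩
  refine ⟨n, fun j => ((monoEquivOfFin s hn) j.rev : α), ?_, ?_⟩
  · intro i j hij
    exact Subtype.coe_lt_coe.mpr ((monoEquivOfFin s hn).strictMono (Fin.rev_lt_rev.mpr hij))
  · ext x
    simp only [Set.mem_range]
    constructor
    · rintro ⟨j, rfl⟩; exact ((monoEquivOfFin s hn) j.rev).2
    · intro hx
      exact ⟨((monoEquivOfFin s hn).symm ⟨x, hx⟩).rev, by simp⟩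

/-- From a chain of flats with a transversal `⊇ J`, extract a subchain of which `J` is an
exact transversal. -/
lemma subchain_extract {V : Type*} (G : SimpleGraph V) {k : ℕ} (c : Fin (k + 1) → Set V)
    (hc : StrictAnti c) (hfl : ∀ i, c i ∈ flats G) (y : Fin k → V)
    (hy : ∀ i : Fin k, y i ∈ c i.castSucc \ c i.succ) (J : Set V) (hJ : J ⊆ Set.range y) :
    ∃ (m : ℕ) (c' : Fin (m + 1) → Set V), IsFlatChain G c' ∧ IsTransversal c' J := by
  classical
  set I : Finset (Fin k) := Finset.univ.filter (fun i => y i ∈ J) with hI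
  set m := I.card with hm
  set g : Fin m ↪o Fin k := I.orderEmbOfFin rfl with hg
  have hgI : ∀ t, g t ∈ I := fun t => I.orderEmbOfFin_mem rfl t
  set idx : Fin (m + 1) → Fin (k + 1) := fun j =>
    if h : (j : ℕ) = 0 then 0 else (g ⟨(j : ℕ) - 1, by omega⟩).succ with hidx
  have idx_succ : ∀ t : Fin m, idx t.succ = (g t).succ := by
    intro t
    simp only [hidx, Fin.val_succ]
    rw [dif_neg (by omega)]
    congr 1
  have idx_cast : ∀ t : Fin m, (idx t.castSucc : ℕ) ≤ ((g t).castSucc : ℕ) := by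
    intro t
    simp only [hidx, Fin.coe_castSucc]
    by_cases h : (t : ℕ) = 0
    · rw [dif_pos h]; simp
    · rw [dif_neg h]
      have : (⟨(t : ℕ) - 1, by omega⟩ : Fin m) < t := by
        rw [Fin.lt_def]; simp; omega
      have := g.strictMono this
      simp only [Fin.val_succ]
      rw [Fin.lt_def] at this
      omega
  have idx_mono : StrictMono idx := by
    intro i j hij
    rw [Fin.lt_def] at hij ⊢
    simp only [hidx]
    by_cases hi : (i : ℕ) = 0
    · rw [dif_pos hi, dif_neg (by omega)]
      simp [Fin.val_succ]
    · rw [dif_neg hi, dif_neg (by omega)]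
      simp only [Fin.val_succ]
      have : (⟨(i : ℕ) - 1, by omega⟩ : Fin m) < ⟨(j : ℕ) - 1, by omega⟩ := by
        rw [Fin.lt_def]; simp; omega
      have := g.strictMono this
      rw [Fin.lt_def] at this
      omega
  refine ⟨m, c ∘ idx, ⟨fun a b hab => hc (idx_mono hab), fun i => hfl _⟩,
    fun t => y (g t), ?_, ?_⟩
  · ext x
    simp only [Set.mem_range]
    constructor
    · rintro ⟨t, rfl⟩
      have := hgI t
      rw [hI] at this
      simpa using (Finset.mem_filter.mp this).2
    · intro hx
      obtain ⟨i, rfl⟩ := hJ hx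
      have hiI : i ∈ I := by rw [hI]; simp [hx]
      obtain ⟨t, ht⟩ : ∃ t, g t = i := by
        have : i ∈ Set.range g := by rw [Finset.range_orderEmbOfFin]; exact_mod_cast hiI
        exact this
      exact ⟨t, by rw [ht]⟩
  · intro t
    constructor
    · have h1 : idx t.castSucc ≤ (g t).castSucc := by
        rw [Fin.le_def]; exact idx_cast t
      exact hc.antitone h1 (hy (g t)).1
    · have := idx_succ t
      simp only [Function.comp_apply, this]
      exact (hy (g t)).2

/-- Any chain of flats of a finite graph extends to a maximal chain of flats. -/
lemma extend_maximal {V : Type*} [Fintype V] (G : SimpleGraph V) {k : ℕ}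
    (c : Fin (k + 1) → Set V) (hc : IsFlatChain G c) :
    ∃ (m : ℕ) (e : Fin (m + 1) → Set V), IsMaximalFlatChain G e ∧
      Set.range c ⊆ Set.range e := by
  classical
  set s : Set ↥(flats G) := {X | (X : Set V) ∈ Set.range c} with hsdef
  have hs : IsChain (· ≤ ·) s := by
    rintro a has b hbs hab
    obtain ⟨i, hi⟩ := has
    obtain ⟨j, hj⟩ := hbs
    rcases le_total i j with h | h
    · refine Or.inr (show b ≤ a from ?_)
      rw [← Subtype.coe_le_coe, ← hi, ← hj]
      exact hc.1.antitone h
    · refine Or.inl (show a ≤ b from ?_)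
      rw [← Subtype.coe_le_coe, ← hi, ← hj]
      exact hc.1.antitone h
  obtain ⟨M, hM, hsM⟩ := hs.exists_maxChain
  set t : Set (Set V) := Subtype.val '' M with htdef
  have htchain : IsChain (· ≤ ·) t := by
    rintro _ ⟨a, haM, rfl⟩ _ ⟨b, hbM, rfl⟩ hab
    have : a ≠ b := fun h => hab (by rw [h])
    rcases hM.1 haM hbM this with h | h
    · exact Or.inl h
    · exact Or.inr h
  have htfin : t.Finite := Set.toFinite t
  have htne : t.Nonempty := by
    refine ⟨c 0, ⟨c 0, hc.2 0⟩, hsM ?_, rfl⟩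
    exact ⟨0, rfl⟩
  obtain ⟨n, e, he, hrange⟩ := chain_enum htchain htfin htne
  refine ⟨n, e, ⟨⟨he, ?_⟩, ?_⟩, ?_⟩
  · intro i
    have : e i ∈ t := hrange ▸ Set.mem_range_self i
    obtain ⟨a, haM, ha⟩ := this
    rw [← ha]
    exact a.2
  · intro X hX hins
    set X' : ↥(flats G) := ⟨X, hX⟩ with hX'
    have hchain : IsChain (· ≤ ·) (insert X' M) := by
      rintro a ha b hb hab
      have hvals : (a : Set V) ∈ insert X (Set.range e) := by
        rcases ha with rfl | ha
        · exact Set.mem_insert _ _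
        · exact Set.mem_insert_of_mem _ (hrange ▸ ⟨a, ha, rfl⟩)
      have hvals' : (b : Set V) ∈ insert X (Set.range e) := by
        rcases hb with rfl | hb
        · exact Set.mem_insert _ _
        · exact Set.mem_insert_of_mem _ (hrange ▸ ⟨b, hb, rfl⟩)
      have hne : (a : Set V) ≠ (b : Set V) := fun h => hab (Subtype.ext h)
      rcases hins hvals hvals' hne with h | h
      · exact Or.inl h
      · exact Or.inr h
    have : M = insert X' M := hM.2 hchain (Set.subset_insert _ _)
    have hX'M : X' ∈ M := this ▸ Set.mem_insert _ _
    rw [hrange]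
    exact ⟨X', hX'M, rfl⟩
  · rintro _ ⟨i, rfl⟩
    rw [hrange]
    exact ⟨⟨c i, hc.2 i⟩, hsM ⟨i, rfl⟩, rfl⟩

/-- For a finite graph `G` and `J ⊆ V`: `J` is a transversal of the partition of successive
differences for some chain of flats of `G` iff `J` is a partial transversal of the partition
of successive differences for some maximal chain of flats of `G`. -/
theorem transversal_iff_partial_transversal_of_maximal_chain
    {V : Type*} [Fintype V] (G : SimpleGraph V) (J : Set V) :
    (∃ (k : ℕ) (c : Fin (k + 1) → Set V), IsFlatChain G c ∧ IsTransversal c J) ↔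
    (∃ (k : ℕ) (c : Fin (k + 1) → Set V), IsMaximalFlatChain G c ∧
      ∃ T : Set V, IsTransversal c T ∧ J ⊆ T) := by
  classical
  constructor
  · rintro ⟨k, c, hc, y, hyJ, hy⟩
    obtain ⟨m, e, hmax, hce⟩ := extend_maximal G c hc
    have he : StrictAnti e := hmax.1.1
    set P : Fin m → Set V := fun t => e t.castSucc \ e t.succ with hP
    have hPne : ∀ t, (P t).Nonempty := by
      intro t
      have : e t.succ < e t.castSucc := he (Fin.castSucc_lt_succ : t.castSucc < t.succ)
      obtain ⟨x, hx1, hx2⟩ := Set.exists_of_ssubset this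
      exact ⟨x, hx1, hx2⟩
    -- no two transversal points of `c` lie in the same piece of `e`
    have claim : ∀ (i i' : Fin k) (t : Fin m), i < i' → y i ∈ P t → y i' ∈ P t → False := by
      intro i i' t hii' h1 h2
      obtain ⟨a, ha⟩ : ∃ a, e a = c i.succ := hce (Set.mem_range_self i.succ)
      have hsub : c i'.castSucc ⊆ c i.succ := by
        refine hc.1.antitone ?_
        rw [Fin.le_def]
        have := Fin.lt_def.mp hii'
        simp only [Fin.val_succ, Fin.coe_castSucc]
        omega
      have hy2 : y i' ∈ c i.succ := hsub (hy i').1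
      rcases le_or_gt a t.castSucc with h | h
      · have : e t.castSucc ⊆ e a := he.antitone h
        exact (hy i).2 (ha ▸ this h1.1)
      · have hle : t.succ ≤ a := by
          rw [Fin.le_def]
          have := Fin.lt_def.mp h
          simp only [Fin.val_succ, Fin.coe_castSucc] at this ⊢
          omega
        have : e a ⊆ e t.succ := he.antitone hle
        exact h2.2 (this (ha ▸ hy2))
    -- every transversal point of `c` lies in some piece of `e`
    have claim2 : ∀ i : Fin k, ∃ t : Fin m, y i ∈ P t := by
      intro i
      obtain ⟨b, hb⟩ : ∃ b, e b = c i.succ := hce (Set.mem_range_self i.succ)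
      obtain ⟨a, ha⟩ : ∃ a, e a = c i.castSucc := hce (Set.mem_range_self i.castSucc)
      have h0 : y i ∈ e 0 := he.antitone (Fin.zero_le a) (ha ▸ (hy i).1)
      have hex : ∃ u : ℕ, ∃ h : u < m + 1, y i ∉ e ⟨u, h⟩ := by
        refine ⟨b, b.isLt, ?_⟩
        have : (⟨(b : ℕ), b.isLt⟩ : Fin (m + 1)) = b := rfl
        rw [this, hb]
        exact (hy i).2
      set u₀ := Nat.find hex with hu₀
      obtain ⟨hlt, hnot⟩ := Nat.find_spec hex
      have hu0ne : u₀ ≠ 0 := by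
        intro h
        rw [hu₀] at h
        obtain ⟨h1, h2⟩ := Nat.find_spec hex
        have h3 : (⟨Nat.find hex, h1⟩ : Fin (m + 1)) = 0 := Fin.ext (by rw [Fin.val_zero]; exact h)
        exact h2 (by rw [h3]; exact h0)
      have hu0lt : u₀ < m + 1 := hlt
      refine ⟨⟨u₀ - 1, by omega⟩, ?_, ?_⟩
      · by_contra hcon
        have : ∃ h : u₀ - 1 < m + 1, y i ∉ e ⟨u₀ - 1, h⟩ := by
          refine ⟨by omega, ?_⟩
          have : (⟨u₀ - 1, by omega⟩ : Fin m).castSucc = ⟨u₀ - 1, by omega⟩ := rfl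
          rw [this] at hcon
          exact hcon
        exact Nat.find_min hex (by omega) this
      · have : (⟨u₀ - 1, by omega⟩ : Fin m).succ = ⟨u₀, hu0lt⟩ := by
          ext; simp only [Fin.val_succ]; omega
        rw [this]
        exact hnot
    set z : Fin m → V := fun t =>
      if h : (Set.range y ∩ P t).Nonempty then h.choose else (hPne t).choose with hz
    have hzmem : ∀ t, z t ∈ P t := by
      intro t
      simp only [hz]
      by_cases h : (Set.range y ∩ P t).Nonempty
      · rw [dif_pos h]; exact h.choose_spec.2
      · rw [dif_neg h]; exact (hPne t).choose_spec
    refine ⟨m, e, hmax, Set.range z, ⟨z, rfl, fun t => hzmem t⟩, ?_⟩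
    intro x hx
    rw [← hyJ] at hx
    obtain ⟨i, rfl⟩ := hx
    obtain ⟨t, ht⟩ := claim2 i
    have hne : (Set.range y ∩ P t).Nonempty := ⟨y i, ⟨i, rfl⟩, ht⟩
    have hzt : z t = hne.choose := by simp only [hz]; exact dif_pos hne
    obtain ⟨⟨i', hi'⟩, hmem⟩ := hne.choose_spec
    have : y i = y i' := by
      rcases lt_trichotomy i i' with h | h | h
      · exact absurd (claim i i' t h ht (hi' ▸ hmem)) (fun f => f)
      · rw [h]
      · exact absurd (claim i' i t h (hi' ▸ hmem) ht) (fun f => f)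
    refine ⟨t, ?_⟩
    rw [hzt, ← hi', ← this]
  · rintro ⟨k, c, ⟨⟨hcA, hcF⟩, _⟩, T, ⟨y, hyT, hyP⟩, hJT⟩
    exact subchain_extract G c hcA hcF y hyP J (by rw [hyT]; exact hJT)
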